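/- Let Q be an n×n Stieltjes matrix, z ∈ {0,1}^n, and W = (Q ∘ z z⊤)†. Then 0 ≤ W_{ij} ≤ (Q⁻¹)_{ij} for all i, j ∈ [n]. In particular, if (Q⁻¹)_{ij} = 0 then W_{ij} = 0. -/

import Mathlib

open Matrix
open scoped Classical

/-- The Moore–Penrose pseudoinverse of a real square matrix, defined via its four
characterizing equations (and `0` if no such matrix exists; by uniqueness of the
Moore–Penrose pseudoinverse, when it exists this definition picks it out). -/
noncomputable def pinv {m : Type*} [Fintype m] [DecidableEq m]
    (A : Matrix m m ℝ) : Matrix m m ℝ :=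
  if h : ∃ B : Matrix m m ℝ,
      A * B * A = A ∧ B * A * B = B ∧ (A * B)ᵀ = A * B ∧ (B * A)ᵀ = B * A
  then h.choose else 0

/-- `Q ∘ e_S e_Sᵀ`: the matrix agreeing with `Q` on entries indexed by `S × S`,
and zero elsewhere. -/
def mask {n : ℕ} (Q : Matrix (Fin n) (Fin n) ℝ) (S : Finset (Fin n)) :
    Matrix (Fin n) (Fin n) ℝ :=
  Matrix.of fun i j => if i ∈ S ∧ j ∈ S then Q i j else 0

/-! ### Auxiliary lemmas -/

/-- Uniqueness of the Moore–Penrose pseudoinverse. -/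
lemma pinv_eq_of {m : Type*} [Fintype m] [DecidableEq m] (A B : Matrix m m ℝ)
    (h1 : A * B * A = A) (h2 : B * A * B = B)
    (h3 : (A * B)ᵀ = A * B) (h4 : (B * A)ᵀ = B * A) : pinv A = B := by
  have hex : ∃ C : Matrix m m ℝ,
      A * C * A = A ∧ C * A * C = C ∧ (A * C)ᵀ = A * C ∧ (C * A)ᵀ = C * A :=
    ⟨B, h1, h2, h3, h4⟩
  rw [pinv, dif_pos hex]
  obtain ⟨g1, g2, g3, g4⟩ := hex.choose_spec
  set C := hex.choose with hC
  have hAC : A * C = A * B := by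
    calc A * C = (A * B * A) * C := by rw [h1]
    _ = (A * B) * (A * C) := by rw [Matrix.mul_assoc]
    _ = (A * B)ᵀ * (A * C)ᵀ := by rw [h3, g3]
    _ = Bᵀ * (A * C * A)ᵀ := by
        rw [Matrix.transpose_mul, Matrix.transpose_mul, Matrix.transpose_mul]
        simp [Matrix.mul_assoc]
    _ = Bᵀ * Aᵀ := by rw [g1]
    _ = (A * B)ᵀ := by rw [Matrix.transpose_mul]
    _ = A * B := h3
  have hCA : C * A = B * A := by
    calc C * A = C * (A * B * A) := by rw [h1]
    _ = (C * A) * (B * A) := by simp [Matrix.mul_assoc]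
    _ = (C * A)ᵀ * (B * A)ᵀ := by rw [g4, h4]
    _ = (A * C * A)ᵀ * Bᵀ := by
        rw [Matrix.transpose_mul, Matrix.transpose_mul, Matrix.transpose_mul]
        simp [Matrix.mul_assoc]
    _ = Aᵀ * Bᵀ := by rw [g1]
    _ = (B * A)ᵀ := by rw [Matrix.transpose_mul]
    _ = B * A := h4
  calc C = C * A * C := g2.symm
  _ = (B * A) * C := by rw [hCA]
  _ = B * (A * C) := by rw [Matrix.mul_assoc]
  _ = B * (A * B) := by rw [hAC]
  _ = B * A * B := by rw [Matrix.mul_assoc]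
  _ = B := h2

/-- Inverse-positivity of symmetric positive definite `Z`-matrices, vector form:
if `Q x ≥ 0` entrywise then `x ≥ 0` entrywise. -/
lemma mmatrix_mulVec_nonneg {m : Type*} [Fintype m] [DecidableEq m]
    (Q : Matrix m m ℝ) (hQ : Q.PosDef) (hoff : ∀ i j, i ≠ j → Q i j ≤ 0)
    (x : m → ℝ) (hx : ∀ i, 0 ≤ Q.mulVec x i) : ∀ i, 0 ≤ x i := by
  set p : m → ℝ := fun i => max (x i) 0 with hp
  set q : m → ℝ := fun i => max (-x i) 0 with hq
  have hpq : x = p - q := by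
    funext i
    simp only [hp, hq, Pi.sub_apply, max_zero_sub_max_neg_zero_eq_self]
  have hpn : ∀ i, 0 ≤ p i := fun i => le_max_right _ _
  have hqn : ∀ i, 0 ≤ q i := fun i => le_max_right _ _
  have hpq0 : ∀ i, q i * p i = 0 := by
    intro i
    rcases le_total (x i) 0 with h | h
    · have : p i = 0 := max_eq_right h
      simp [this]
    · have : q i = 0 := max_eq_right (by linarith)
      simp [this]
  have hq0 : q = 0 := by
    by_contra hne
    have hpos : 0 < q ⬝ᵥ Q.mulVec q := by
      have := hQ.dotProduct_mulVec_pos hne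
      simpa using this
    have ht : 0 ≤ q ⬝ᵥ Q.mulVec x :=
      Finset.sum_nonneg fun i _ => mul_nonneg (hqn i) (hx i)
    have hsplit : q ⬝ᵥ Q.mulVec x = q ⬝ᵥ Q.mulVec p - q ⬝ᵥ Q.mulVec q := by
      rw [hpq, Matrix.mulVec_sub, dotProduct_sub]
    have hsp : q ⬝ᵥ Q.mulVec p ≤ 0 := by
      rw [dotProduct]
      apply Finset.sum_nonpos
      intro i _
      have hmv : Q.mulVec p i = ∑ j, Q i j * p j := rfl
      rw [hmv, Finset.mul_sum]
      apply Finset.sum_nonpos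
      intro j _
      by_cases hij : i = j
      · subst hij
        have : q i * (Q i i * p i) = Q i i * (q i * p i) := by ring
        rw [this, hpq0 i, mul_zero]
      · have h1 : Q i j * p j ≤ 0 := mul_nonpos_of_nonpos_of_nonneg (hoff i j hij) (hpn j)
        exact mul_nonpos_of_nonneg_of_nonpos (hqn i) h1
    linarith
  intro i
  have h2 : (-x i) ⊔ 0 = 0 := by
    have := congrFun hq0 i
    simpa [hq] using this
  have : -x i ≤ 0 := sup_eq_right.mp h2
  linarith

lemma mmatrix_inv_nonneg {m : Type*} [Fintype m] [DecidableEq m]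
    (Q : Matrix m m ℝ) (hQ : Q.PosDef) (hoff : ∀ i j, i ≠ j → Q i j ≤ 0) :
    ∀ i j, 0 ≤ Q⁻¹ i j := by
  intro i j
  have hdet : IsUnit Q.det := isUnit_iff_ne_zero.mpr hQ.det_pos.ne'
  have key : ∀ k, 0 ≤ Q.mulVec (Q⁻¹.mulVec (Pi.single j 1)) k := by
    intro k
    rw [Matrix.mulVec_mulVec, Matrix.mul_nonsing_inv _ hdet, Matrix.one_mulVec]
    by_cases h : k = j <;> simp [Pi.single_apply, h]
  have := mmatrix_mulVec_nonneg Q hQ hoff _ key i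
  simpa using this

section extension

variable {n : ℕ} (S : Finset (Fin n))

/-- Sum of a "one-hot" indexed family over the subtype of a finset. -/
lemma sum_subtype_ite {β : Type*} [AddCommMonoid β] (f : ↥S → β) (i : Fin n) :
    (∑ s : ↥S, if i = (s : Fin n) then f s else 0) =
      if h : i ∈ S then f ⟨i, h⟩ else 0 := by
  split_ifs with h
  · rw [Finset.sum_eq_single (⟨i, h⟩ : ↥S)]
    · simp
    · intro b _ hb
      rw [if_neg]
      intro he
      exact hb (Subtype.ext he.symm)
    · simp
  · apply Finset.sum_eq_zero
    intro s _
    rw [if_neg]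
    rintro rfl
    exact h s.2

/-- Extension by zero of a vector supported on `S`. -/
def ext0 (y : ↥S → ℝ) : Fin n → ℝ := fun k => if h : k ∈ S then y ⟨k, h⟩ else 0

lemma ext0_coe (y : ↥S → ℝ) (s : ↥S) : ext0 S y (s : Fin n) = y s := by
  simp [ext0, s.2]

lemma mulVec_ext0 (Q : Matrix (Fin n) (Fin n) ℝ) (y : ↥S → ℝ) (k : Fin n) :
    Q.mulVec (ext0 S y) k = ∑ s : ↥S, Q k (s : Fin n) * y s := by
  have h0 : Q.mulVec (ext0 S y) k = ∑ l : Fin n, Q k l * ext0 S y l := rfl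
  rw [h0, ← Finset.sum_subset (Finset.subset_univ S)
      (fun l _ hl => by simp [ext0, hl]),
    ← Finset.sum_coe_sort S (fun l => Q k l * ext0 S y l)]
  exact Finset.sum_congr rfl fun s _ => by rw [ext0_coe]

lemma dot_ext0 (y : ↥S → ℝ) (w : Fin n → ℝ) :
    (ext0 S y) ⬝ᵥ w = ∑ s : ↥S, y s * w (s : Fin n) := by
  have h0 : (ext0 S y) ⬝ᵥ w = ∑ l : Fin n, ext0 S y l * w l := rfl
  rw [h0, ← Finset.sum_subset (Finset.subset_univ S)
      (fun l _ hl => by simp [ext0, hl]),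
    ← Finset.sum_coe_sort S (fun l => ext0 S y l * w l)]
  exact Finset.sum_congr rfl fun s _ => by rw [ext0_coe]

/-- A principal submatrix of a positive definite matrix is positive definite. -/
lemma posDef_submatrix {Q : Matrix (Fin n) (Fin n) ℝ} (hQ : Q.PosDef) :
    (Q.submatrix ((↑) : ↥S → Fin n) ((↑) : ↥S → Fin n)).PosDef := by
  refine Matrix.PosDef.of_dotProduct_mulVec_pos (hQ.1.submatrix _) (fun x hx => ?_)
  have hx' : ext0 S x ≠ 0 := by
    intro h0
    apply hx
    funext s
    have := congrFun h0 (s : Fin n)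
    rwa [ext0_coe] at this
  have h := hQ.dotProduct_mulVec_pos hx'
  simp only [star_trivial] at h ⊢
  have heq : (ext0 S x) ⬝ᵥ Q.mulVec (ext0 S x)
      = x ⬝ᵥ (Q.submatrix ((↑) : ↥S → Fin n) (↑)).mulVec x := by
    rw [dot_ext0]
    have h1 : x ⬝ᵥ (Q.submatrix ((↑) : ↥S → Fin n) (↑)).mulVec x
        = ∑ s : ↥S, x s * (Q.submatrix ((↑) : ↥S → Fin n) (↑)).mulVec x s := rfl
    rw [h1]
    apply Finset.sum_congr rfl
    intro s _
    congr 1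
    rw [mulVec_ext0]
    rfl
  rw [← heq]
  exact h

/-- The inclusion matrix `Fin n × ↥S`. -/
def inc : Matrix (Fin n) ↥S ℝ := Matrix.of fun i s => if i = (s : Fin n) then 1 else 0

lemma incT_mul_inc : (inc S)ᵀ * inc S = 1 := by
  ext s t
  simp only [Matrix.mul_apply, Matrix.transpose_apply, inc, Matrix.of_apply]
  rw [Finset.sum_congr rfl (fun i _ => by
    rw [ite_mul, one_mul, zero_mul] : ∀ i ∈ Finset.univ, _ = if i = (s:Fin n) then (if i = (t:Fin n) then (1:ℝ) else 0) else 0)]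
  rw [Finset.sum_ite_eq' Finset.univ (s : Fin n) (fun i => if i = (t : Fin n) then (1:ℝ) else 0)]
  simp only [Finset.mem_univ, if_true]
  by_cases h : s = t
  · subst h; simp
  · rw [if_neg (fun he => h (Subtype.ext he)), Matrix.one_apply_ne h]

lemma inc_cancel (Z : Matrix ↥S (Fin n) ℝ) : (inc S)ᵀ * (inc S * Z) = Z := by
  rw [← Matrix.mul_assoc, incT_mul_inc, Matrix.one_mul]

lemma inc_key (X Y : Matrix ↥S ↥S ℝ) :
    (inc S * X * (inc S)ᵀ) * (inc S * Y * (inc S)ᵀ) = inc S * (X * Y) * (inc S)ᵀ := by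
  simp only [Matrix.mul_assoc]
  rw [inc_cancel]

lemma inc_mul_mul_incT (X : Matrix ↥S ↥S ℝ) (i j : Fin n) :
    (inc S * X * (inc S)ᵀ) i j =
      if h : i ∈ S ∧ j ∈ S then X ⟨i, h.1⟩ ⟨j, h.2⟩ else 0 := by
  have hrow : ∀ (Y : Matrix ↥S (Fin n) ℝ) (k : Fin n),
      (inc S * Y) i k = if h : i ∈ S then Y ⟨i, h⟩ k else 0 := by
    intro Y k
    simp only [Matrix.mul_apply, inc, Matrix.of_apply, ite_mul, one_mul, zero_mul]
    exact sum_subtype_ite S (fun s => Y s k) i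
  have hcol : ∀ s : ↥S, (X * (inc S)ᵀ) s j = if h : j ∈ S then X s ⟨j, h⟩ else 0 := by
    intro s
    simp only [Matrix.mul_apply, inc, Matrix.transpose_apply, Matrix.of_apply, mul_ite, mul_one,
      mul_zero]
    exact sum_subtype_ite S (fun t => X s t) j
  rw [Matrix.mul_assoc, hrow]
  by_cases hi : i ∈ S
  · rw [dif_pos hi, hcol]
    by_cases hj : j ∈ S
    · rw [dif_pos hj, dif_pos ⟨hi, hj⟩]
    · rw [dif_neg hj, dif_neg (fun h => hj h.2)]
  · rw [dif_neg hi, dif_neg (fun h => hi h.1)]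

end extension

/-- for a Stieltjes matrix `Q` and `z ∈ {0,1}ⁿ`, with `W = (Q ∘ z zᵀ)†`,
one has `0 ≤ W_{ij} ≤ (Q⁻¹)_{ij}`; in particular `(Q⁻¹)_{ij} = 0` forces `W_{ij} = 0`. -/
theorem stmt13 {n : ℕ} (Q : Matrix (Fin n) (Fin n) ℝ)
    (hQ : Q.PosDef) (hoff : ∀ i j : Fin n, i ≠ j → Q i j ≤ 0)
    (z : Fin n → ℝ) (hz : ∀ i, z i = 0 ∨ z i = 1) :
    ∀ i j : Fin n,
      0 ≤ pinv (Matrix.of fun i j => Q i j * (z i * z j)) i j ∧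
      pinv (Matrix.of fun i j => Q i j * (z i * z j)) i j ≤ Q⁻¹ i j ∧
      (Q⁻¹ i j = 0 → pinv (Matrix.of fun i j => Q i j * (z i * z j)) i j = 0) := by
  classical
  set S : Finset (Fin n) := Finset.univ.filter (fun i => z i = 1) with hS
  have hmemS : ∀ i, i ∈ S ↔ z i = 1 := by
    intro i; simp [hS]
  set A : Matrix ↥S ↥S ℝ := Q.submatrix ((↑) : ↥S → Fin n) (↑) with hA
  have hApd : A.PosDef := posDef_submatrix S hQ
  have hAoff : ∀ s t : ↥S, s ≠ t → A s t ≤ 0 := by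
    intro s t hst
    exact hoff _ _ (fun h => hst (Subtype.ext h))
  have hAdet : IsUnit A.det := isUnit_iff_ne_zero.mpr hApd.det_pos.ne'
  have hQdet : IsUnit Q.det := isUnit_iff_ne_zero.mpr hQ.det_pos.ne'
  have hAAinv : A * A⁻¹ = 1 := Matrix.mul_nonsing_inv _ hAdet
  have hAinvA : A⁻¹ * A = 1 := Matrix.nonsing_inv_mul _ hAdet
  -- the masked matrix factors through the inclusion
  set M : Matrix (Fin n) (Fin n) ℝ := Matrix.of fun i j => Q i j * (z i * z j) with hM
  have hMfac : M = inc S * A * (inc S)ᵀ := by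
    ext i j
    rw [inc_mul_mul_incT]
    by_cases hi : i ∈ S
    · by_cases hj : j ∈ S
      · rw [dif_pos ⟨hi, hj⟩]
        simp only [hM, Matrix.of_apply, hA, Matrix.submatrix_apply]
        rw [(hmemS i).mp hi, (hmemS j).mp hj]
        ring
      · rw [dif_neg (fun h => hj h.2)]
        have : z j = 0 := (hz j).resolve_right (fun h => hj ((hmemS j).mpr h))
        simp [hM, this]
    · rw [dif_neg (fun h => hi h.1)]
      have : z i = 0 := (hz i).resolve_right (fun h => hi ((hmemS i).mpr h))
      simp [hM, this]
  set W : Matrix (Fin n) (Fin n) ℝ := inc S * A⁻¹ * (inc S)ᵀ with hW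
  have hMW : M * W = inc S * (1 : Matrix ↥S ↥S ℝ) * (inc S)ᵀ := by
    rw [hMfac, hW, inc_key, hAAinv]
  have hWM : W * M = inc S * (1 : Matrix ↥S ↥S ℝ) * (inc S)ᵀ := by
    rw [hMfac, hW, inc_key, hAinvA]
  have hpinv : pinv M = W := by
    apply pinv_eq_of
    · rw [hMW, hMfac, inc_key, Matrix.one_mul]
    · rw [hWM, hW, inc_key, Matrix.one_mul]
    · rw [hMW, Matrix.transpose_mul, Matrix.transpose_mul, Matrix.transpose_transpose,
        Matrix.transpose_one, Matrix.mul_one, Matrix.one_mul]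
    · rw [hWM, Matrix.transpose_mul, Matrix.transpose_mul, Matrix.transpose_transpose,
        Matrix.transpose_one, Matrix.mul_one, Matrix.one_mul]
  have hWentry : ∀ i j : Fin n,
      W i j = if h : i ∈ S ∧ j ∈ S then A⁻¹ ⟨i, h.1⟩ ⟨j, h.2⟩ else 0 := by
    intro i j; rw [hW, inc_mul_mul_incT]
  have hAinv_nonneg : ∀ s t : ↥S, 0 ≤ A⁻¹ s t := mmatrix_inv_nonneg A hApd hAoff
  have hQinv_nonneg : ∀ i j : Fin n, 0 ≤ Q⁻¹ i j := mmatrix_inv_nonneg Q hQ hoff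
  -- monotonicity
  have hmono : ∀ (i j : Fin n) (hi : i ∈ S) (hj : j ∈ S),
      A⁻¹ ⟨i, hi⟩ ⟨j, hj⟩ ≤ Q⁻¹ i j := by
    intro i j hi hj
    set y : ↥S → ℝ := A⁻¹.mulVec (Pi.single ⟨j, hj⟩ 1) with hy
    set x : Fin n → ℝ := Q⁻¹.mulVec (Pi.single j 1) with hx
    have hAy : A.mulVec y = Pi.single ⟨j, hj⟩ 1 := by
      rw [hy, Matrix.mulVec_mulVec, hAAinv, Matrix.one_mulVec]
    have hQx : Q.mulVec x = Pi.single j 1 := by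
      rw [hx, Matrix.mulVec_mulVec, Matrix.mul_nonsing_inv _ hQdet, Matrix.one_mulVec]
    have hy_nonneg : ∀ s, 0 ≤ y s := by
      apply mmatrix_mulVec_nonneg A hApd hAoff
      intro s
      rw [hAy]
      by_cases h : s = ⟨j, hj⟩ <;> simp [Pi.single_apply, h]
    have hdiff : ∀ k, 0 ≤ Q.mulVec (x - ext0 S y) k := by
      intro k
      rw [Matrix.mulVec_sub, Pi.sub_apply, hQx, mulVec_ext0]
      by_cases hk : k ∈ S
      · have e1 : (∑ s : ↥S, Q k (s : Fin n) * y s) = A.mulVec y ⟨k, hk⟩ := rfl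
        rw [e1, hAy]
        have e2 : (Pi.single (⟨j, hj⟩ : ↥S) (1:ℝ) : ↥S → ℝ) ⟨k, hk⟩
            = (Pi.single j (1:ℝ) : Fin n → ℝ) k := by
          simp only [Pi.single_apply]
          by_cases h : k = j
          · subst h; simp
          · rw [if_neg (fun he => h (by simpa [Subtype.ext_iff] using he)), if_neg h]
        rw [e2]
        simp
      · have h1 : (Pi.single j (1:ℝ) : Fin n → ℝ) k = 0 := by
          have hkj : k ≠ j := fun h => hk (by rw [h]; exact hj)
          simp [Pi.single_apply, hkj]
        have h2 : (∑ s : ↥S, Q k (s : Fin n) * y s) ≤ 0 := by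
          apply Finset.sum_nonpos
          intro s _
          have hks : k ≠ (s : Fin n) := fun h => hk (by rw [h]; exact s.2)
          exact mul_nonpos_of_nonpos_of_nonneg (hoff _ _ hks) (hy_nonneg s)
        rw [h1]
        linarith
    have hsub := mmatrix_mulVec_nonneg Q hQ hoff _ hdiff i
    have hxle : ext0 S y i ≤ x i := by
      simpa [sub_nonneg] using hsub
    have hyi : ext0 S y i = A⁻¹ ⟨i, hi⟩ ⟨j, hj⟩ := by
      have h3 : ext0 S y i = y ⟨i, hi⟩ := by simp [ext0, hi]
      rw [h3, hy]
      simp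
    have hxi : x i = Q⁻¹ i j := by
      rw [hx]; simp
    rw [← hyi, ← hxi]
    exact hxle
  -- assemble
  intro i j
  rw [hpinv, hWentry]
  by_cases h : i ∈ S ∧ j ∈ S
  · rw [dif_pos h]
    refine ⟨hAinv_nonneg _ _, hmono i j h.1 h.2, fun h0 => ?_⟩
    exact le_antisymm (h0 ▸ hmono i j h.1 h.2) (hAinv_nonneg _ _)
  · rw [dif_neg h]
    exact ⟨le_refl 0, hQinv_nonneg i j, fun _ => rfl⟩
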